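/- Let X be a non-empty separable metric space. Then dim_H(X) = sup_{x ∈ X} α(x). Moreover, if X is compact, the supremum is attained: there exists x ∈ X with α(x) = dim_H(X). -/

import Mathlib

/- STATEMENT 6: Let X be a non-empty separable metric space. Then
   dim_H(X) = sup_{x ∈ X} α(x), where α is the local Hausdorff dimension. Moreover, if
   X is compact, the supremum is attained: there is x with α(x) = dim_H(X).
   (For metric spaces, separability is the same as second countability.) -/

open MeasureTheory Metric
open scoped ENNReal

/-- The local Hausdorff dimension `α(x) = inf_{ε > 0} dim_H (B_ε(x))`. -/
noncomputable def localDimH {X : Type*} [MetricSpace X] (x : X) : ℝ≥0∞ :=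
  ⨅ (ε : ℝ) (_ : 0 < ε), dimH (Metric.ball x ε)

lemma localDimH_le_dimH_univ {X : Type*} [MetricSpace X] (x : X) :
    localDimH x ≤ dimH (Set.univ : Set X) := by
  refine le_trans ?_ (dimH_mono (Set.subset_univ (Metric.ball x 1)))
  exact iInf₂_le 1 one_pos

lemma localDimH_lt {X : Type*} [MetricSpace X] {x : X} {c : ℝ≥0∞}
    (h : localDimH x < c) : ∃ ε > 0, dimH (Metric.ball x ε) < c := by
  simpa [localDimH, iInf_lt_iff] using h

theorem statement6 {X : Type*} [MetricSpace X] [SecondCountableTopology X] [Nonempty X] :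
    (dimH (Set.univ : Set X) = ⨆ x : X, localDimH x) ∧
    (CompactSpace X → ∃ x : X, localDimH x = dimH (Set.univ : Set X)) := by
  constructor
  · refine le_antisymm ?_ (iSup_le fun x => localDimH_le_dimH_univ x)
    by_contra h
    push_neg at h
    obtain ⟨c, hSc, hcD⟩ := exists_between h
    have hx : ∀ x : X, ∃ ε > 0, dimH (Metric.ball x ε) < c := fun x =>
      localDimH_lt (lt_of_le_of_lt (le_iSup _ x) hSc)
    choose ε hε hdim using hx
    obtain ⟨t, htc, htu⟩ := TopologicalSpace.countable_cover_nhds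
      (fun x => Metric.ball_mem_nhds x (hε x))
    have : dimH (Set.univ : Set X) ≤ c := by
      rw [← htu, dimH_bUnion htc]
      exact iSup₂_le fun x _ => (hdim x).le
    exact absurd this (not_le.mpr hcD)
  · intro hc
    by_contra h
    push_neg at h
    have hlt : ∀ x : X, localDimH x < dimH (Set.univ : Set X) := fun x =>
      lt_of_le_of_ne (localDimH_le_dimH_univ x) (h x)
    have hx : ∀ x : X, ∃ ε > 0,
        dimH (Metric.ball x ε) < dimH (Set.univ : Set X) := fun x => localDimH_lt (hlt x)
    choose ε hε hdim using hx
    obtain ⟨t, -, htu⟩ := isCompact_univ.elim_nhds_subcover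
      (fun x => Metric.ball x (ε x)) (fun x _ => Metric.ball_mem_nhds x (hε x))
    have hpos : (0 : ℝ≥0∞) < dimH (Set.univ : Set X) :=
      lt_of_le_of_lt zero_le (hlt (Classical.arbitrary X))
    have hsup : dimH (Set.univ : Set X) ≤ ⨆ x ∈ t, dimH (Metric.ball x (ε x)) := by
      exact le_trans (dimH_mono htu) (le_of_eq (dimH_bUnion t.countable_toSet fun x => Metric.ball x (ε x)))
    have hsup' : (⨆ x ∈ t, dimH (Metric.ball x (ε x))) < dimH (Set.univ : Set X) := by
      rw [← Finset.sup_eq_iSup]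
      exact Finset.sup_lt_iff hpos |>.mpr fun x _ => hdim x
    exact absurd (lt_of_le_of_lt hsup hsup') (lt_irrefl _)
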